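/- Let F : 2^V → ℝ be monotone (F(A) ≤ F(B) whenever A ⊆ B) and submodular (F(A) + F(B) ≥ F(A∪B) + F(A∩B) for all A, B ⊆ V) with F(∅) = 0. For w ∈ ℝ^V define Ω_∞(w) = inf{ Σ_{S⊆V} α_S F(S) : α_S ≥ 0, Σ_{S : i∈S} α_S ≥ |w_i| ∀i } and Θ_∞(w) = inf{ Σ_{S⊆V} α_S F(S) : α_S ≥ 0, Σ_{S⊆V} α_S = 1, Σ_{S : i∈S} α_S ≥ |w_i| ∀i }. Then for every w with ‖w‖_∞ ≤ 1, Ω_∞(w) = Θ_∞(w) = ∫_0^1 F({ i ∈ V : |w_i| ≥ t }) dt, i.e. the homogeneous and non-homogeneous convex envelopes coincide on the unit ℓ_∞-ball and equal the Lovász extension of F evaluated at |w|. -/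

import Mathlib

open scoped BigOperators

/-- The homogeneous `ℓ∞`-relaxation `Ω_∞`. -/
noncomputable def omegaInf {V : Type*} [Fintype V] [DecidableEq V]
    (F : Finset V → ℝ) (w : V → ℝ) : ℝ :=
  sInf { t : ℝ | ∃ α : Finset V → ℝ,
    (∀ S, 0 ≤ α S) ∧
    (∀ i : V, |w i| ≤ ∑ S : Finset V, if i ∈ S then α S else 0) ∧
    t = ∑ S : Finset V, α S * F S }

/-- The non-homogeneous `ℓ∞`-relaxation `Θ_∞`. -/
noncomputable def thetaInf {V : Type*} [Fintype V] [DecidableEq V]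
    (F : Finset V → ℝ) (w : V → ℝ) : ℝ :=
  sInf { t : ℝ | ∃ α : Finset V → ℝ,
    (∀ S, 0 ≤ α S) ∧ (∑ S : Finset V, α S) = 1 ∧
    (∀ i : V, |w i| ≤ ∑ S : Finset V, if i ∈ S then α S else 0) ∧
    t = ∑ S : Finset V, α S * F S }

open MeasureTheory Set

namespace Stmt3Aux

variable {V : Type*} [Fintype V] [DecidableEq V]

/-- Level set of a vector. -/
noncomputable def Lev (x : V → ℝ) (t : ℝ) : Finset V := Finset.univ.filter (fun i => t ≤ x i)

lemma Lev_subset (x : V → ℝ) {s t : ℝ} (h : s ≤ t) : Lev x t ⊆ Lev x s := by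
  intro i hi
  simp only [Lev, Finset.mem_filter, Finset.mem_univ, true_and] at hi ⊢
  linarith

variable (F : Finset V → ℝ)

lemma Fnn (hF0 : F ∅ = 0) (hmono : ∀ A B : Finset V, A ⊆ B → F A ≤ F B) (S : Finset V) : 0 ≤ F S := hF0 ▸ hmono ∅ S (Finset.empty_subset S)

lemma meas_aux (hmono : ∀ A B : Finset V, A ⊆ B → F A ≤ F B) (x : V → ℝ) (S : Finset V) (c : ℝ) :
    Measurable (fun t : ℝ => F (Lev x (t - c) ∩ S)) := by
  apply Antitone.measurable
  intro s t hst
  exact hmono _ _ (Finset.inter_subset_inter (Lev_subset x (by linarith)) (le_refl S))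

lemma Lev_empty (x : V → ℝ) {t : ℝ} (ht : ∀ i, x i < t) : Lev x t = ∅ := by
  apply Finset.eq_empty_of_forall_notMem
  intro i hi
  simp only [Lev, Finset.mem_filter, Finset.mem_univ, true_and] at hi
  exact absurd hi (not_le.mpr (ht i))

lemma intg_aux (hF0 : F ∅ = 0) (hmono : ∀ A B : Finset V, A ⊆ B → F A ≤ F B) (x : V → ℝ) (S : Finset V) (c b : ℝ) :
    IntegrableOn (fun t : ℝ => F (Lev x (t - c) ∩ S)) (Ioi b) := by
  set M : ℝ := max b (c + 1 + ∑ i, |x i|) with hM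
  have hbM : b ≤ M := le_max_left _ _
  have hzero : ∀ t : ℝ, M < t → F (Lev x (t - c) ∩ S) = 0 := by
    intro t ht
    have h1 : ∀ i, x i < t - c := by
      intro i
      have h2 : x i ≤ ∑ j, |x j| :=
        le_trans (le_abs_self _) (Finset.single_le_sum (fun j _ => abs_nonneg (x j)) (Finset.mem_univ i))
      have h3 : c + 1 + ∑ j, |x j| ≤ M := le_max_right _ _
      linarith
    rw [Lev_empty x h1, Finset.empty_inter, hF0]
  rw [← Ioc_union_Ioi_eq_Ioi hbM, integrableOn_union]
  constructor
  · apply Measure.integrableOn_of_bounded (M := F Finset.univ) measure_Ioc_lt_top.ne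
    · exact (meas_aux F hmono x S c).aestronglyMeasurable
    · filter_upwards with t
      rw [Real.norm_eq_abs, abs_of_nonneg (Fnn F hF0 hmono _)]
      exact hmono _ _ (Finset.subset_univ _)
  · apply (integrableOn_zero (ε' := ℝ)).congr_fun _ measurableSet_Ioi
    intro t ht
    exact (hzero t ht).symm

lemma meas_lev (hmono : ∀ A B : Finset V, A ⊆ B → F A ≤ F B) (x : V → ℝ) : Measurable (fun t : ℝ => F (Lev x t)) := by
  have := meas_aux F hmono x Finset.univ 0
  simpa [Finset.inter_univ] using this

lemma intg_lev (hF0 : F ∅ = 0) (hmono : ∀ A B : Finset V, A ⊆ B → F A ≤ F B) (x : V → ℝ) (b : ℝ) :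
    IntegrableOn (fun t : ℝ => F (Lev x t)) (Ioi b) := by
  have := intg_aux F hF0 hmono x Finset.univ 0 b
  simpa [Finset.inter_univ] using this

/-- Key single-step inequality. -/
lemma step (hF0 : F ∅ = 0) (hmono : ∀ A B : Finset V, A ⊆ B → F A ≤ F B)
    (hsub : ∀ A B : Finset V, F (A ∪ B) + F (A ∩ B) ≤ F A + F B) (x : V → ℝ) (hx : ∀ i, 0 ≤ x i) (S : Finset V) {a : ℝ} (ha : 0 ≤ a) :
    ∫ t in Ioi (0:ℝ), F (Lev (fun i => x i + if i ∈ S then a else 0) t)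
      ≤ (∫ t in Ioi (0:ℝ), F (Lev x t)) + a * F S := by
  set x' : V → ℝ := fun i => x i + if i ∈ S then a else 0 with hx'
  have hset : ∀ t : ℝ, Lev x' t = Lev x t ∪ (Lev x (t - a) ∩ S) := by
    intro t
    ext i
    simp only [Lev, x', Finset.mem_filter, Finset.mem_univ, true_and, Finset.mem_union,
      Finset.mem_inter]
    by_cases hi : i ∈ S
    · simp only [hi, if_true, and_true]
      constructor
      · intro h; right; linarith
      · rintro (h | h) <;> linarith
    · simp only [hi, if_false, and_false, or_false, add_zero]
  have hcap : ∀ t : ℝ, Lev x t ∩ (Lev x (t - a) ∩ S) = Lev x t ∩ S := by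
    intro t
    ext i
    simp only [Lev, Finset.mem_inter, Finset.mem_filter, Finset.mem_univ, true_and]
    constructor
    · rintro ⟨h1, _, h3⟩; exact ⟨h1, h3⟩
    · rintro ⟨h1, h3⟩; exact ⟨h1, ⟨by linarith, h3⟩⟩
  have hpt : ∀ t : ℝ, F (Lev x' t) ≤ F (Lev x t) + (F (Lev x (t - a) ∩ S) - F (Lev x t ∩ S)) := by
    intro t
    have h := hsub (Lev x t) (Lev x (t - a) ∩ S)
    rw [hcap t] at h
    rw [hset t]
    linarith
  have I1 : IntegrableOn (fun t : ℝ => F (Lev x' t)) (Ioi 0) := intg_lev F hF0 hmono x' 0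
  have I2 : IntegrableOn (fun t : ℝ => F (Lev x t)) (Ioi 0) := intg_lev F hF0 hmono x 0
  have I3 : IntegrableOn (fun t : ℝ => F (Lev x (t - a) ∩ S)) (Ioi 0) :=
    intg_aux F hF0 hmono x S a 0
  have I4 : IntegrableOn (fun t : ℝ => F (Lev x t ∩ S)) (Ioi 0) := by
    have := intg_aux F hF0 hmono x S 0 0
    simpa using this
  have I5 : IntegrableOn (fun t : ℝ => F (Lev x t ∩ S)) (Ioi (-a)) := by
    have := intg_aux F hF0 hmono x S 0 (-a)
    simpa using this
  have hshift : (∫ t in Ioi (0:ℝ), F (Lev x (t - a) ∩ S)) = ∫ t in Ioi (-a), F (Lev x t ∩ S) := by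
    have h1 : (Ioi (0:ℝ)).indicator (fun t => F (Lev x (t - a) ∩ S))
        = fun t => (Ioi (-a)).indicator (fun u => F (Lev x u ∩ S)) (t - a) := by
      funext t
      by_cases h : (0:ℝ) < t
      · rw [indicator_of_mem (mem_Ioi.mpr h),
          indicator_of_mem (mem_Ioi.mpr (by linarith : -a < t - a))]
      · rw [indicator_of_notMem (fun hc => h (mem_Ioi.mp hc)),
          indicator_of_notMem (fun hc => h (by have := mem_Ioi.mp hc; linarith))]
    rw [← integral_indicator measurableSet_Ioi, ← integral_indicator measurableSet_Ioi, h1]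
    exact integral_sub_right_eq_self (fun u => (Ioi (-a)).indicator (fun u => F (Lev x u ∩ S)) u) a
  have hsplit : (∫ t in Ioi (-a:ℝ), F (Lev x t ∩ S))
      = (∫ t in Ioc (-a:ℝ) 0, F (Lev x t ∩ S)) + ∫ t in Ioi (0:ℝ), F (Lev x t ∩ S) := by
    rw [← setIntegral_union (Ioc_disjoint_Ioi le_rfl) measurableSet_Ioi
      (I5.mono_set Ioc_subset_Ioi_self) I4,
      Ioc_union_Ioi_eq_Ioi (by linarith : (-a:ℝ) ≤ 0)]
  have hconst : (∫ t in Ioc (-a:ℝ) 0, F (Lev x t ∩ S)) = a * F S := by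
    rw [setIntegral_congr_fun measurableSet_Ioc (g := fun _ => F S) ?_]
    · rw [setIntegral_const, measureReal_def, Real.volume_Ioc, smul_eq_mul]
      congr 1
      rw [ENNReal.toReal_ofReal (by linarith)]
      ring
    · intro t ht
      have huniv : Lev x t = Finset.univ := by
        apply Finset.eq_univ_iff_forall.mpr
        intro i
        simp only [Lev, Finset.mem_filter, Finset.mem_univ, true_and]
        exact le_trans ht.2 (hx i)
      simp only [huniv, Finset.univ_inter]
  calc ∫ t in Ioi (0:ℝ), F (Lev x' t)
      ≤ ∫ t in Ioi (0:ℝ), (F (Lev x t) + (F (Lev x (t - a) ∩ S) - F (Lev x t ∩ S))) :=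
        setIntegral_mono_on I1 (I2.add (I3.sub I4)) measurableSet_Ioi (fun t _ => hpt t)
    _ = (∫ t in Ioi (0:ℝ), F (Lev x t))
        + ((∫ t in Ioi (0:ℝ), F (Lev x (t - a) ∩ S)) - ∫ t in Ioi (0:ℝ), F (Lev x t ∩ S)) := by
        have I34 : IntegrableOn (fun t : ℝ => F (Lev x (t - a) ∩ S) - F (Lev x t ∩ S)) (Ioi 0) :=
          I3.sub I4
        rw [integral_add I2 I34, integral_sub I3 I4]
    _ ≤ (∫ t in Ioi (0:ℝ), F (Lev x t)) + a * F S := by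
        rw [hshift, hsplit, hconst]
        simp
  
/-- Induction: Lovász value of a nonnegative combination is at most its cost. -/
lemma lower (hF0 : F ∅ = 0) (hmono : ∀ A B : Finset V, A ⊆ B → F A ≤ F B)
    (hsub : ∀ A B : Finset V, F (A ∪ B) + F (A ∩ B) ≤ F A + F B) (𝒮 : Finset (Finset V)) (α : Finset V → ℝ) (hα : ∀ S, 0 ≤ α S) :
    (∫ t in Ioi (0:ℝ), F (Lev (fun i => ∑ S ∈ 𝒮, if i ∈ S then α S else 0) t))
      ≤ ∑ S ∈ 𝒮, α S * F S := by
  induction 𝒮 using Finset.induction_on with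
  | empty =>
    simp only [Finset.sum_empty]
    rw [setIntegral_congr_fun measurableSet_Ioi (g := fun _ => (0:ℝ)) ?_]
    · simp
    · intro t ht
      show F (Lev (fun _ : V => (0:ℝ)) t) = 0
      rw [Lev_empty _ (fun i => mem_Ioi.mp ht), hF0]
  | @insert S 𝒮 hS ih =>
    have hfun : (fun i => ∑ T ∈ insert S 𝒮, if i ∈ T then α T else 0)
        = fun i => (∑ T ∈ 𝒮, if i ∈ T then α T else 0) + if i ∈ S then α S else 0 := by
      funext i; rw [Finset.sum_insert hS, add_comm]
    rw [hfun, Finset.sum_insert hS]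
    have hx : ∀ i, 0 ≤ ∑ T ∈ 𝒮, if i ∈ T then α T else 0 :=
      fun i => Finset.sum_nonneg (fun T _ => by split <;> [exact hα T; exact le_rfl])
    have := step F hF0 hmono hsub (fun i => ∑ T ∈ 𝒮, if i ∈ T then α T else 0) hx S (hα S)
    linarith

end Stmt3Aux

theorem stmt_3 {V : Type*} [Fintype V] [DecidableEq V]
    (F : Finset V → ℝ) (hF0 : F ∅ = 0)
    (hmono : ∀ A B : Finset V, A ⊆ B → F A ≤ F B)
    (hsub : ∀ A B : Finset V, F (A ∪ B) + F (A ∩ B) ≤ F A + F B)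
    (w : V → ℝ) (hw : ∀ i, |w i| ≤ 1) :
    (omegaInf F w = ∫ t in (0:ℝ)..1, F (Finset.univ.filter (fun i => t ≤ |w i|))) ∧
    (thetaInf F w = ∫ t in (0:ℝ)..1, F (Finset.univ.filter (fun i => t ≤ |w i|))) := by
  classical
  open Stmt3Aux in
  set aw : V → ℝ := fun i => |w i| with haw
  set L : ℝ := ∫ t in Ioc (0:ℝ) 1, F (Lev aw t) with hL
  have hIcc : (∫ t in (0:ℝ)..1, F (Finset.univ.filter (fun i => t ≤ |w i|))) = L := by
    rw [intervalIntegral.integral_of_le zero_le_one]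
    rfl
  -- measurability of the cells
  have hB : ∀ S : Finset V, MeasurableSet {t : ℝ | Lev aw t = S} := by
    intro S
    have hEq : {t : ℝ | Lev aw t = S} = ⋂ i : V, {t : ℝ | t ≤ aw i ↔ i ∈ S} := by
      ext t
      simp only [mem_setOf_eq, mem_iInter, Finset.ext_iff, Lev, Finset.mem_filter,
        Finset.mem_univ, true_and]
    rw [hEq]
    refine MeasurableSet.iInter fun i => ?_
    by_cases hi : i ∈ S
    · have : {t : ℝ | t ≤ aw i ↔ i ∈ S} = Iic (aw i) := by ext t; simp [hi]
      rw [this]; exact measurableSet_Iic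
    · have : {t : ℝ | t ≤ aw i ↔ i ∈ S} = Ioi (aw i) := by
        ext t; simp [hi, not_le]
      rw [this]; exact measurableSet_Ioi
  -- key sum formula
  have hks : ∀ G : Finset V → ℝ,
      (∑ S : Finset V, (volume ({t : ℝ | Lev aw t = S} ∩ Ioc 0 1)).toReal * G S)
        = ∫ t in Ioc (0:ℝ) 1, G (Lev aw t) := by
    intro G
    have hpt : (fun t : ℝ => G (Lev aw t))
        = fun t => ∑ S : Finset V, ({u : ℝ | Lev aw u = S}).indicator (fun _ => G S) t := by
      funext t
      rw [Finset.sum_eq_single_of_mem (Lev aw t) (Finset.mem_univ _)]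
      · rw [indicator_of_mem (by exact rfl)]
      · intro S _ hne
        exact indicator_of_notMem (fun h => hne (Eq.symm h)) _
    rw [hpt, integral_finset_sum]
    · refine Finset.sum_congr rfl fun S _ => ?_
      rw [setIntegral_indicator (hB S), setIntegral_const, smul_eq_mul, Set.inter_comm, measureReal_def]
    · intro S _
      exact ((integrableOn_const_iff).mpr (Or.inr measure_Ioc_lt_top)).indicator (hB S)
  set α : Finset V → ℝ := fun S => (volume ({t : ℝ | Lev aw t = S} ∩ Ioc 0 1)).toReal with hαdef
  have hα0 : ∀ S, 0 ≤ α S := fun S => ENNReal.toReal_nonneg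
  have hsum1 : (∑ S : Finset V, α S) = 1 := by
    have h := hks (fun _ => (1:ℝ))
    simp only [mul_one] at h
    rw [hαdef]
    rw [h, setIntegral_const, smul_eq_mul, mul_one, measureReal_def, Real.volume_Ioc]
    norm_num
  have hcov : ∀ i : V, |w i| ≤ ∑ S : Finset V, if i ∈ S then α S else 0 := by
    intro i
    have hrw : (∑ S : Finset V, if i ∈ S then α S else 0)
        = ∑ S : Finset V, α S * (if i ∈ S then 1 else 0) :=
      Finset.sum_congr rfl fun S _ => by split <;> simp
    rw [hrw, hks (fun S => if i ∈ S then 1 else 0)]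
    have h1 : ∀ t ∈ Ioc (0:ℝ) 1,
        (if i ∈ Lev aw t then (1:ℝ) else 0) = (Iic (aw i)).indicator (fun _ => (1:ℝ)) t := by
      intro t _
      simp [Lev, Set.indicator_apply]
    rw [setIntegral_congr_fun measurableSet_Ioc h1, setIntegral_indicator measurableSet_Iic,
      setIntegral_const, smul_eq_mul, mul_one]
    have h2 : Ioc (0:ℝ) 1 ∩ Iic (aw i) = Ioc 0 (aw i) := by
      ext t
      simp only [mem_inter_iff, mem_Ioc, mem_Iic]
      constructor
      · rintro ⟨⟨h3, _⟩, h4⟩; exact ⟨h3, h4⟩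
      · rintro ⟨h3, h4⟩; exact ⟨⟨h3, le_trans h4 (hw i)⟩, h4⟩
    rw [h2, measureReal_def, Real.volume_Ioc]
    rw [ENNReal.toReal_ofReal (by simp [haw] : (0:ℝ) ≤ aw i - 0)]
    simp [haw]
  have hcost : (∑ S : Finset V, α S * F S) = L := hks F
  -- lower bound
  have hlb : ∀ r ∈ { t : ℝ | ∃ α : Finset V → ℝ,
      (∀ S, 0 ≤ α S) ∧
      (∀ i : V, |w i| ≤ ∑ S : Finset V, if i ∈ S then α S else 0) ∧
      t = ∑ S : Finset V, α S * F S }, L ≤ r := by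
    rintro r ⟨β, hβ0, hβcov, rfl⟩
    set c : V → ℝ := fun i => ∑ S : Finset V, if i ∈ S then β S else 0 with hc
    have hIc : IntegrableOn (fun t : ℝ => F (Lev c t)) (Ioi 0) := intg_lev F hF0 hmono c 0
    have h1 : L ≤ ∫ t in Ioc (0:ℝ) 1, F (Lev c t) := by
      rw [hL]
      refine setIntegral_mono_on
        ((intg_lev F hF0 hmono aw 0).mono_set (Ioc_subset_Ioi_self))
        (hIc.mono_set (Ioc_subset_Ioi_self)) measurableSet_Ioc (fun t _ => ?_)
      refine hmono _ _ (fun i hi => ?_)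
      simp only [Lev, Finset.mem_filter, Finset.mem_univ, true_and] at hi ⊢
      exact le_trans hi (le_trans (le_refl _) (hβcov i))
    have h2 : (∫ t in Ioc (0:ℝ) 1, F (Lev c t)) ≤ ∫ t in Ioi (0:ℝ), F (Lev c t) :=
      setIntegral_mono_set hIc (ae_of_all _ fun t => Fnn F hF0 hmono _)
        (HasSubset.Subset.eventuallyLE Ioc_subset_Ioi_self)
    have h3 := lower F hF0 hmono hsub Finset.univ β hβ0
    linarith
  have hmemθ : L ∈ { t : ℝ | ∃ α : Finset V → ℝ,
      (∀ S, 0 ≤ α S) ∧ (∑ S : Finset V, α S) = 1 ∧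
      (∀ i : V, |w i| ≤ ∑ S : Finset V, if i ∈ S then α S else 0) ∧
      t = ∑ S : Finset V, α S * F S } := ⟨α, hα0, hsum1, hcov, hcost.symm⟩
  have hsubset : { t : ℝ | ∃ α : Finset V → ℝ,
      (∀ S, 0 ≤ α S) ∧ (∑ S : Finset V, α S) = 1 ∧
      (∀ i : V, |w i| ≤ ∑ S : Finset V, if i ∈ S then α S else 0) ∧
      t = ∑ S : Finset V, α S * F S } ⊆ { t : ℝ | ∃ α : Finset V → ℝ,
      (∀ S, 0 ≤ α S) ∧
      (∀ i : V, |w i| ≤ ∑ S : Finset V, if i ∈ S then α S else 0) ∧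
      t = ∑ S : Finset V, α S * F S } := by
    rintro t ⟨γ, h1, _, h3, h4⟩; exact ⟨γ, h1, h3, h4⟩
  have hmemΩ := hsubset hmemθ
  constructor
  · rw [hIcc, omegaInf]
    exact le_antisymm (csInf_le ⟨L, hlb⟩ hmemΩ) (le_csInf ⟨L, hmemΩ⟩ hlb)
  · rw [hIcc, thetaInf]
    exact le_antisymm (csInf_le ⟨L, fun r hr => hlb r (hsubset hr)⟩ hmemθ)
      (le_csInf ⟨L, hmemθ⟩ (fun r hr => hlb r (hsubset hr)))
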